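/- Let h be a differentiable solution on (a,b) of the Riccati equation h'(x) = d(x) - (B(x) - A(x))h(x) - e(x)h(x)², with d, e continuous and positive on (a,b). Define λ⁺(x) = (-(B(x)-A(x)) + sqrt((B(x)-A(x))² + 4 d(x) e(x)))/(2 e(x)), the positive characteristic root. Assume λ⁺ is strictly increasing on (a,b), h(a⁺) > 0 and h'(a⁺) > 0. Then h(x) < λ⁺(x) for all x in (a,b). -/

import Mathlib

open Set Filter

/-- If `h` solves the Riccati equation
`h' = d - (B - A) h - e h²` on `(a,b)` with `d, e` continuous and positive,
the positive characteristic root `λ⁺` is strictly increasing on `(a,b)`,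
and `h(a⁺) > 0`, `h'(a⁺) > 0`, then `h(x) < λ⁺(x)` on `(a,b)`. -/
theorem riccati_below_char_root (a b : ℝ) (h d e A B : ℝ → ℝ) (L L' : ℝ)
    (lam : ℝ → ℝ)
    (hlam : ∀ x ∈ Ioo a b,
      lam x = (-(B x - A x) + Real.sqrt ((B x - A x) ^ 2 + 4 * d x * e x)) /
        (2 * e x))
    (hA : ContinuousOn A (Ioo a b)) (hB : ContinuousOn B (Ioo a b))
    (hd : ContinuousOn d (Ioo a b)) (he : ContinuousOn e (Ioo a b))
    (hdpos : ∀ x ∈ Ioo a b, 0 < d x) (hepos : ∀ x ∈ Ioo a b, 0 < e x)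
    (hric : ∀ x ∈ Ioo a b,
      HasDerivAt h (d x - (B x - A x) * h x - e x * (h x) ^ 2) x)
    (hmono : StrictMonoOn lam (Ioo a b))
    (hlim : Tendsto h (nhdsWithin a (Ioi a)) (nhds L)) (hL : 0 < L)
    (hlim' : Tendsto (fun x => d x - (B x - A x) * h x - e x * (h x) ^ 2)
      (nhdsWithin a (Ioi a)) (nhds L')) (hL' : 0 < L') :
    ∀ x ∈ Ioo a b, h x < lam x := by
  intro x₀ hx₀
  by_contra hcon
  push_neg at hcon
  -- continuity of h on (a,b)
  have hhc : ContinuousOn h (Ioo a b) := fun x hx =>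
    (hric x hx).continuousAt.continuousWithinAt
  -- Lemma A : positive Riccati RHS implies h < lam
  have lemA : ∀ x ∈ Ioo a b,
      0 < d x - (B x - A x) * h x - e x * (h x) ^ 2 → h x < lam x := by
    intro x hx hq
    have hex := hepos x hx
    have hdx := hdpos x hx
    have hsq : (2 * e x * h x + (B x - A x)) ^ 2
        < (B x - A x) ^ 2 + 4 * d x * e x := by nlinarith
    have h1 : 2 * e x * h x + (B x - A x)
        < Real.sqrt ((B x - A x) ^ 2 + 4 * d x * e x) := by
      calc 2 * e x * h x + (B x - A x) ≤ |2 * e x * h x + (B x - A x)| := le_abs_self _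
        _ = Real.sqrt ((2 * e x * h x + (B x - A x)) ^ 2) := (Real.sqrt_sq_eq_abs _).symm
        _ < Real.sqrt ((B x - A x) ^ 2 + 4 * d x * e x) :=
            Real.sqrt_lt_sqrt (sq_nonneg _) hsq
    rw [hlam x hx, lt_div_iff₀ (by linarith)]
    linarith
  -- Lemma B : if k > lam x then the quadratic at k is negative
  have lemB : ∀ x ∈ Ioo a b, ∀ k : ℝ, lam x < k →
      d x - (B x - A x) * k - e x * k ^ 2 < 0 := by
    intro x hx k hk
    have hex := hepos x hx
    have hdx := hdpos x hx
    rw [hlam x hx, div_lt_iff₀ (by linarith)] at hk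
    have hs : Real.sqrt ((B x - A x) ^ 2 + 4 * d x * e x) ^ 2
        = (B x - A x) ^ 2 + 4 * d x * e x :=
      Real.sq_sqrt (by nlinarith [sq_nonneg (B x - A x)])
    have hs0 : 0 ≤ Real.sqrt ((B x - A x) ^ 2 + 4 * d x * e x) := Real.sqrt_nonneg _
    set s := Real.sqrt ((B x - A x) ^ 2 + 4 * d x * e x) with hsdef
    have h1 : 0 < 2 * e x * k + (B x - A x) - s := by linarith
    have h2 : 0 < 2 * e x * k + (B x - A x) + s := by linarith
    nlinarith [mul_pos h1 h2]
  -- near a the Riccati RHS is positive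
  have hev : ∀ᶠ x in nhdsWithin a (Ioi a),
      0 < d x - (B x - A x) * h x - e x * (h x) ^ 2 :=
    hlim'.eventually (eventually_gt_nhds hL')
  obtain ⟨u, hu, hsub⟩ := mem_nhdsGT_iff_exists_Ioo_subset.mp hev
  -- choose x₁
  have hax₀ : a < x₀ := hx₀.1
  set v : ℝ := min u x₀ with hv
  have hav : a < v := lt_min hu hax₀
  set x₁ : ℝ := (a + v) / 2 with hx₁def
  have hax₁ : a < x₁ := by simp only [hx₁def]; linarith
  have hx₁v : x₁ < v := by simp only [hx₁def]; linarith
  have hx₁x₀ : x₁ < x₀ := lt_of_lt_of_le hx₁v (min_le_right u x₀)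
  have hx₁mem : x₁ ∈ Ioo a b := ⟨hax₁, lt_trans hx₁x₀ hx₀.2⟩
  have hx₁lt : h x₁ < lam x₁ :=
    lemA x₁ hx₁mem (hsub ⟨hax₁, lt_of_lt_of_le hx₁v (min_le_left u x₀)⟩)
  -- continuity of lam
  have hlamc : ContinuousOn lam (Ioo a b) := by
    have hform : ContinuousOn (fun x =>
        (-(B x - A x) + Real.sqrt ((B x - A x) ^ 2 + 4 * d x * e x)) / (2 * e x))
        (Ioo a b) := by
      apply ContinuousOn.div
      · exact ((hB.sub hA).neg).add
          ((((hB.sub hA).pow 2).add ((continuousOn_const.mul hd).mul he)).sqrt)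
      · exact continuousOn_const.mul he
      · intro x hx
        have := hepos x hx
        positivity
    exact hform.congr (fun x hx => hlam x hx)
  -- the set where lam ≤ h, and its infimum c
  set T : Set ℝ := Icc x₁ x₀ ∩ (fun x => lam x - h x) ⁻¹' Iic 0 with hT
  have hIccsub : Icc x₁ x₀ ⊆ Ioo a b := fun x hx =>
    ⟨lt_of_lt_of_le hax₁ hx.1, lt_of_le_of_lt hx.2 hx₀.2⟩
  have hTc : IsClosed T :=
    ContinuousOn.preimage_isClosed_of_isClosed
      (((hlamc.sub hhc)).mono hIccsub) isClosed_Icc isClosed_Iic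
  have hTne : T.Nonempty := ⟨x₀, ⟨hx₁x₀.le, le_refl _⟩, by simp [sub_nonpos, hcon]⟩
  have hTbdd : BddBelow T :=
    (BddBelow.mono (inter_subset_left) bddBelow_Icc)
  set c : ℝ := sInf T with hc
  have hcT : c ∈ T := hTc.csInf_mem hTne hTbdd
  obtain ⟨⟨hx₁c, hcx₀⟩, hlc'⟩ := hcT
  have hlc : lam c ≤ h c := by simpa [sub_nonpos] using hlc'
  have hcmem : c ∈ Ioo a b := hIccsub ⟨hx₁c, hcx₀⟩
  have hx₁c' : x₁ < c := by
    rcases lt_or_eq_of_le hx₁c with h' | h'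
    · exact h'
    · exact absurd hlc (by rw [← h']; linarith)
  -- minimality: below c we have h < lam
  have hbefore : ∀ x ∈ Ico x₁ c, h x < lam x := by
    intro x hx
    by_contra hcon2
    push_neg at hcon2
    have hxT : x ∈ T := ⟨⟨hx.1, le_trans hx.2.le hcx₀⟩, by simp [sub_nonpos, hcon2]⟩
    have := csInf_le hTbdd hxT
    exact absurd hx.2 (not_lt.mpr this)
  -- Grönwall / integrating factor argument with k = lam c
  set k : ℝ := lam c with hk
  set m : ℝ → ℝ := fun t => -(B t - A t) - e t * (h t + k) with hm
  have hmc : ContinuousOn m (Ioo a b) :=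
    ((hB.sub hA).neg).sub (he.mul (hhc.add continuousOn_const))
  set M : ℝ → ℝ := fun x => ∫ t in x₁..x, m t with hM
  have hMd : ∀ x ∈ Ioo a b, HasDerivAt M (m x) x := by
    intro x hx
    apply intervalIntegral.integral_hasDerivAt_right
    · apply ContinuousOn.intervalIntegrable
      exact hmc.mono (Set.OrdConnected.uIcc_subset Set.ordConnected_Ioo hx₁mem hx)
    · exact hmc.stronglyMeasurableAtFilter isOpen_Ioo x hx
    · exact hmc.continuousAt (isOpen_Ioo.mem_nhds hx)
  set φ : ℝ → ℝ := fun x => (h x - k) * Real.exp (-(M x)) with hφdef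
  have hφ : ∀ x ∈ Ioo a b, HasDerivAt φ
      ((d x - (B x - A x) * k - e x * k ^ 2) * Real.exp (-(M x))) x := by
    intro x hx
    have h1 := hric x hx
    have h2 := ((hMd x hx).neg).exp
    have h3 : HasDerivAt (fun y => (h y - k) * Real.exp (-(M y))) _ x := (h1.sub_const k).mul h2
    convert h3 using 1
    simp only [hm, Pi.neg_apply]
    ring
  have hIccsub2 : Icc x₁ c ⊆ Ioo a b := fun x hx =>
    ⟨lt_of_lt_of_le hax₁ hx.1, lt_of_le_of_lt hx.2 hcmem.2⟩
  have hanti : StrictAntiOn φ (Icc x₁ c) := by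
    apply strictAntiOn_of_deriv_neg (convex_Icc x₁ c)
    · intro x hx
      exact (hφ x (hIccsub2 hx)).continuousAt.continuousWithinAt
    · intro x hx
      rw [interior_Icc] at hx
      have hxm : x ∈ Ioo a b := hIccsub2 ⟨hx.1.le, hx.2.le⟩
      rw [(hφ x hxm).deriv]
      exact mul_neg_of_neg_of_pos
        (lemB x hxm k (hmono hxm hcmem hx.2)) (Real.exp_pos _)
  have hlt : φ c < φ x₁ :=
    hanti (left_mem_Icc.mpr hx₁c) (right_mem_Icc.mpr hx₁c) hx₁c'
  have hφx₁ : φ x₁ < 0 := by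
    have : h x₁ < k := lt_trans hx₁lt (hmono hx₁mem hcmem hx₁c')
    exact mul_neg_of_neg_of_pos (by linarith) (Real.exp_pos _)
  have hφc : 0 ≤ φ c := mul_nonneg (by linarith) (Real.exp_pos _).le
  linarith
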